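/- Let X be a normal Hausdorff space and f, g : X → ℝ bounded from below and lower semicontinuous, everywhere finite. Then A(f+g) = A(f) + A(g), where A(h) := {φ ∈ C_b(X) : φ ≤ h}. That is, every bounded continuous φ ≤ f + g splits as φ = ψ₁ + ψ₂ with ψ₁, ψ₂ ∈ C_b(X), ψ₁ ≤ f, ψ₂ ≤ g. -/

import Mathlib

open BoundedContinuousFunction
open Pointwise


section KTproof
open Filter Topology Set

section helpers
variable {X : Type*} [TopologicalSpace X]

lemma usc_max {u w : X → ℝ} (hu : UpperSemicontinuous u) (hw : UpperSemicontinuous w) :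
    UpperSemicontinuous fun x => max (u x) (w x) := by
  intro x y hy
  filter_upwards [hu x y (lt_of_le_of_lt (le_max_left _ _) hy),
    hw x y (lt_of_le_of_lt (le_max_right _ _) hy)] with z h1 h2
  exact max_lt h1 h2

lemma lsc_min {u w : X → ℝ} (hu : LowerSemicontinuous u) (hw : LowerSemicontinuous w) :
    LowerSemicontinuous fun x => min (u x) (w x) := by
  intro x y hy
  filter_upwards [hu x y (lt_of_lt_of_le hy (min_le_left _ _)),
    hw x y (lt_of_lt_of_le hy (min_le_right _ _))] with z h1 h2
  exact lt_min h1 h2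

lemma usc_sub {φ : X → ℝ} (hφ : Continuous φ) {g : X → ℝ} (hg : LowerSemicontinuous g) :
    UpperSemicontinuous fun x => φ x - g x := by
  intro x y hy
  have hy' : φ x - g x < y := hy
  set ε := (y - (φ x - g x)) / 2 with hε
  have hεpos : 0 < ε := by rw [hε]; linarith
  have h1 : ∀ᶠ z in 𝓝 x, φ z < φ x + ε :=
    (hφ.continuousAt (x := x)).eventually_lt continuousAt_const (by linarith)
  have h2 : ∀ᶠ z in 𝓝 x, g x - ε < g z := hg x (g x - ε) (by linarith)
  filter_upwards [h1, h2] with z hz1 hz2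
  have : φ z - g z < (φ x + ε) - (g x - ε) := by linarith
  linarith [this]

end helpers


section KT
variable {X : Type*} [TopologicalSpace X] [NormalSpace X]

lemma kt_approx (u v : X → ℝ) (hu : UpperSemicontinuous u) (hv : LowerSemicontinuous v)
    (huv : ∀ x, u x ≤ v x) (m M : ℝ) (hm : ∀ x, m ≤ u x) (hM : ∀ x, v x ≤ M)
    (δ : ℝ) (hδ : 0 < δ) :
    ∃ h : X → ℝ, Continuous h ∧ (∀ x, u x - δ ≤ h x) ∧ (∀ x, h x ≤ v x + δ) ∧
      ∃ C : ℝ, ∀ x, ‖h x‖ ≤ C := by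
  obtain ⟨N, hN⟩ : ∃ N : ℕ, M - m ≤ N * δ := by
    obtain ⟨N, hN⟩ := exists_nat_ge ((M - m) / δ)
    exact ⟨N, by rw [div_le_iff₀ hδ] at hN; linarith⟩
  have hex : ∀ i : ℕ, ∃ F : C(X, ℝ), (∀ x, v x ≤ m + i * δ → F x = 0) ∧
      (∀ x, m + (i + 1) * δ ≤ u x → F x = 1) ∧ ∀ x, F x ∈ Icc (0 : ℝ) 1 := by
    intro i
    have hd : Disjoint (v ⁻¹' Iic (m + i * δ)) (u ⁻¹' Ici (m + (i + 1) * δ)) := by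
      rw [Set.disjoint_left]
      intro x hx1 hx2
      simp only [mem_preimage, mem_Iic, mem_Ici] at hx1 hx2
      have := huv x
      nlinarith
    obtain ⟨F, h0, h1, h01⟩ := exists_continuous_zero_one_of_isClosed
      (hv.isClosed_preimage (m + i * δ)) (hu.isClosed_preimage (m + (i + 1) * δ)) hd
    exact ⟨F, fun x hx => h0 hx, fun x hx => h1 hx, h01⟩
  choose F h0 h1 h01 using hex
  refine ⟨fun x => m + δ * ∑ i ∈ Finset.range N, F i x, ?_, ?_, ?_, ?_⟩
  · exact continuous_const.add (continuous_const.mul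
      (continuous_finset_sum _ fun i _ => (F i).continuous))
  · -- lower bound via induction invariant
    have key : ∀ n : ℕ, ∀ x, min (u x) (m + n * δ + δ) - δ ≤
        m + δ * ∑ i ∈ Finset.range n, F i x := by
      intro n
      induction n with
      | zero =>
        intro x
        simp only [Finset.range_zero, Finset.sum_empty, Nat.cast_zero, zero_mul, add_zero,
          mul_zero]
        have := min_le_right (u x) (m + δ)
        linarith
      | succ n ih =>
        intro x
        rw [Finset.sum_range_succ]
        rcases le_or_gt (m + (n + 1) * δ) (u x) with hc | hc
        · have hF : F n x = 1 := h1 n x (by push_cast; linarith)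
          have := ih x
          have hmin1 : min (u x) (m + (↑(n + 1) : ℝ) * δ + δ) ≤ m + (n + 1) * δ + δ := by
            push_cast; exact min_le_right _ _
          have hmin2 : min (u x) (m + (n : ℝ) * δ + δ) = m + (n : ℝ) * δ + δ := by
            apply min_eq_right; nlinarith
          rw [hF]
          push_cast at hmin1 ⊢
          nlinarith
        · have hF : (0 : ℝ) ≤ F n x := (h01 n x).1
          have := ih x
          have hmin2 : min (u x) (m + (n : ℝ) * δ + δ) = u x := by
            apply min_eq_left; push_cast; nlinarith
          have hmin1 : min (u x) (m + (↑(n + 1) : ℝ) * δ + δ) ≤ u x := min_le_left _ _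
          push_cast at hmin1 ⊢
          nlinarith
    intro x
    show u x - δ ≤ m + δ * ∑ i ∈ Finset.range N, F i x
    have := key N x
    have hmin : min (u x) (m + N * δ + δ) = u x := by
      apply min_eq_left
      have := (huv x).trans (hM x)
      linarith
    linarith [hmin ▸ this]
  · -- upper bound via induction invariant
    have key : ∀ n : ℕ, ∀ x, m + δ * ∑ i ∈ Finset.range n, F i x ≤
        min (v x + δ) (m + n * δ) := by
      intro n
      induction n with
      | zero =>
        intro x
        simp only [Finset.range_zero, Finset.sum_empty, Nat.cast_zero, zero_mul, add_zero,
          mul_zero]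
        have h1 := (hm x).trans (huv x)
        exact le_min (by linarith) (le_refl m)
      | succ n ih =>
        intro x
        rw [Finset.sum_range_succ]
        rcases le_or_gt (v x) (m + n * δ) with hc | hc
        · have hF : F n x = 0 := h0 n x hc
          have := ih x
          have : m + δ * (∑ i ∈ Finset.range n, F i x + F n x) ≤ min (v x + δ) (m + n * δ) := by
            rw [hF]; linarith
          refine this.trans (min_le_min (le_refl _) ?_)
          push_cast; nlinarith
        · have hF : F n x ≤ 1 := (h01 n x).2
          have hF0 : (0:ℝ) ≤ F n x := (h01 n x).1
          have := ih x
          have hle : m + δ * (∑ i ∈ Finset.range n, F i x + F n x) ≤ m + n * δ + δ := by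
            have h2 : m + δ * ∑ i ∈ Finset.range n, F i x ≤ m + n * δ :=
              (ih x).trans (min_le_right _ _)
            nlinarith
          apply le_min
          · push_cast; nlinarith
          · push_cast; nlinarith
    intro x
    show m + δ * ∑ i ∈ Finset.range N, F i x ≤ v x + δ
    exact (key N x).trans (min_le_left _ _)
  · refine ⟨max |m| (|m| + δ * N), fun x => ?_⟩
    have h1 : (0:ℝ) ≤ ∑ i ∈ Finset.range N, F i x :=
      Finset.sum_nonneg fun i _ => (h01 i x).1
    have h2 : ∑ i ∈ Finset.range N, F i x ≤ N :=
      (Finset.sum_le_card_nsmul _ _ 1 fun i _ => (h01 i x).2).trans (by simp)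
    show ‖m + δ * ∑ i ∈ Finset.range N, F i x‖ ≤ max |m| (|m| + δ * N)
    rw [Real.norm_eq_abs, abs_le]
    have h3 : 0 ≤ δ * ∑ i ∈ Finset.range N, F i x := mul_nonneg hδ.le h1
    have h4 : δ * ∑ i ∈ Finset.range N, F i x ≤ δ * N := mul_le_mul_of_nonneg_left h2 hδ.le
    constructor
    · have : -(max |m| (|m| + δ * N)) ≤ -|m| := by
        simp only [neg_le_neg_iff]; exact le_max_left _ _
      linarith [neg_abs_le m]
    · have : |m| + δ * N ≤ max |m| (|m| + δ * N) := le_max_right _ _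
      linarith [le_abs_self m]


structure KTData (X : Type*) [TopologicalSpace X] (m M : ℝ) where
  u : X → ℝ
  v : X → ℝ
  hu : UpperSemicontinuous u
  hv : LowerSemicontinuous v
  huv : ∀ x, u x ≤ v x
  hm : ∀ x, m ≤ u x
  hM : ∀ x, v x ≤ M

variable {m M : ℝ}

noncomputable def KTfun (P : KTData X m M) (δ : ℝ) (hδ : 0 < δ) : X →ᵇ ℝ :=
  let e := kt_approx P.u P.v P.hu P.hv P.huv m M P.hm P.hM δ hδ
  ofNormedAddCommGroup (Classical.choose e) (Classical.choose_spec e).1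
    (Classical.choose (Classical.choose_spec e).2.2.2)
    (Classical.choose_spec (Classical.choose_spec e).2.2.2)

lemma KTfun_le (P : KTData X m M) (δ : ℝ) (hδ : 0 < δ) :
    ∀ x, P.u x - δ ≤ KTfun P δ hδ x ∧ KTfun P δ hδ x ≤ P.v x + δ := by
  intro x
  have e := Classical.choose_spec (kt_approx P.u P.v P.hu P.hv P.huv m M P.hm P.hM δ hδ)
  exact ⟨e.2.1 x, e.2.2.1 x⟩

noncomputable def KTnext (P : KTData X m M) (δ : ℝ) (hδ : 0 < δ) : KTData X m M where
  u := fun x => max (P.u x) (KTfun P δ hδ x - δ)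
  v := fun x => min (P.v x) (KTfun P δ hδ x + δ)
  hu := usc_max P.hu (((KTfun P δ hδ).continuous.sub continuous_const).upperSemicontinuous)
  hv := lsc_min P.hv (((KTfun P δ hδ).continuous.add continuous_const).lowerSemicontinuous)
  huv := fun x => by
    have h := KTfun_le P δ hδ x
    have := P.huv x
    apply max_le <;> apply le_min <;> linarith [h.1, h.2]
  hm := fun x => (P.hm x).trans (le_max_left _ _)
  hM := fun x => (min_le_left _ _).trans (P.hM x)

noncomputable def KTseq (P0 : KTData X m M) : ℕ → (X →ᵇ ℝ) × KTData X m M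
  | 0 => (0, P0)
  | n + 1 => (KTfun (KTseq P0 n).2 ((1/2 : ℝ) ^ (n+1)) (by positivity),
      KTnext (KTseq P0 n).2 ((1/2 : ℝ) ^ (n+1)) (by positivity))

lemma KTseq_succ_fst (P0 : KTData X m M) (n : ℕ) :
    (KTseq P0 (n+1)).1 = KTfun (KTseq P0 n).2 ((1/2 : ℝ) ^ (n+1)) (by positivity) := rfl

lemma KTseq_u (P0 : KTData X m M) (n : ℕ) (x : X) :
    (KTseq P0 (n+1)).2.u x
      = max ((KTseq P0 n).2.u x) ((KTseq P0 (n+1)).1 x - (1/2 : ℝ) ^ (n+1)) := rfl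

lemma KTseq_v (P0 : KTData X m M) (n : ℕ) (x : X) :
    (KTseq P0 (n+1)).2.v x
      = min ((KTseq P0 n).2.v x) ((KTseq P0 (n+1)).1 x + (1/2 : ℝ) ^ (n+1)) := rfl

lemma KTseq_le (P0 : KTData X m M) (n : ℕ) (x : X) :
    (KTseq P0 n).2.u x - (1/2 : ℝ) ^ (n+1) ≤ (KTseq P0 (n+1)).1 x ∧
      (KTseq P0 (n+1)).1 x ≤ (KTseq P0 n).2.v x + (1/2 : ℝ) ^ (n+1) :=
  KTfun_le (KTseq P0 n).2 _ (by positivity) x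

lemma KTseq_mono (P0 : KTData X m M) (n : ℕ) (x : X) :
    P0.u x ≤ (KTseq P0 n).2.u x ∧ (KTseq P0 n).2.v x ≤ P0.v x := by
  induction n with
  | zero => exact ⟨le_refl _, le_refl _⟩
  | succ n ih =>
    refine ⟨ih.1.trans ?_, ?_⟩
    · rw [KTseq_u]; exact le_max_left _ _
    · rw [KTseq_v]; exact (min_le_left _ _).trans ih.2


theorem katetov_tong (u v : X → ℝ) (hu : UpperSemicontinuous u) (hv : LowerSemicontinuous v)
    (huv : ∀ x, u x ≤ v x) (m M : ℝ) (hm : ∀ x, m ≤ u x) (hM : ∀ x, v x ≤ M) :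
    ∃ ψ : X →ᵇ ℝ, (∀ x, u x ≤ ψ x) ∧ ∀ x, ψ x ≤ v x := by
  set P0 : KTData X m M := ⟨u, v, hu, hv, huv, hm, hM⟩ with hP0
  set Φ : ℕ → X →ᵇ ℝ := fun n => (KTseq P0 (n+1)).1 with hΦ
  -- Cauchy estimate
  have hcauchy : CauchySeq Φ := by
    apply cauchySeq_of_le_geometric (1/2 : ℝ) (3/4) (by norm_num)
    intro n
    rw [BoundedContinuousFunction.dist_le (by positivity)]
    intro x
    have h1 := KTseq_le P0 (n+1) x
    have h2 : (KTseq P0 (n+1)).2.u x ≥ (KTseq P0 (n+1)).1 x - (1/2 : ℝ) ^ (n+1) := by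
      rw [KTseq_u]; exact le_max_right _ _
    have h3 : (KTseq P0 (n+1)).2.v x ≤ (KTseq P0 (n+1)).1 x + (1/2 : ℝ) ^ (n+1) := by
      rw [KTseq_v]; exact min_le_right _ _
    rw [Real.dist_eq, abs_le]
    have e1 : ((1:ℝ)/2) ^ (n+1+1) = (1/4) * (1/2)^n := by ring
    have e2 : ((1:ℝ)/2) ^ (n+1) = (1/2) * (1/2)^n := by ring
    constructor <;> simp only [hΦ] <;> nlinarith [h1.1, h1.2]
  obtain ⟨ψ, hψ⟩ := cauchySeq_tendsto_of_complete hcauchy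
  have hpt : ∀ x : X, Tendsto (fun n => Φ n x) atTop (𝓝 (ψ x)) := fun x =>
    ((continuous_eval_const (F := X →ᵇ ℝ) x).tendsto ψ).comp hψ
  have hpow : Tendsto (fun n : ℕ => ((1:ℝ)/2) ^ (n+1)) atTop (𝓝 0) := by
    have := tendsto_pow_atTop_nhds_zero_of_lt_one (by norm_num : (0:ℝ) ≤ 1/2) (by norm_num)
    simpa [pow_succ, mul_comm] using this.mul_const (1/2 : ℝ)
  refine ⟨ψ, fun x => ?_, fun x => ?_⟩
  · have hub : ∀ n : ℕ, u x ≤ Φ n x + (1/2:ℝ)^(n+1) := by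
      intro n
      have := (KTseq_mono P0 n x).1
      have h2 := (KTseq_le P0 n x).1
      simp only [hP0] at this
      simp only [hΦ]
      linarith
    have : Tendsto (fun n => Φ n x + (1/2:ℝ)^(n+1)) atTop (𝓝 (ψ x + 0)) :=
      (hpt x).add hpow
    rw [add_zero] at this
    exact ge_of_tendsto' this hub
  · have hub : ∀ n : ℕ, Φ n x - (1/2:ℝ)^(n+1) ≤ v x := by
      intro n
      have := (KTseq_mono P0 n x).2
      have h2 := (KTseq_le P0 n x).2
      simp only [hP0] at this
      simp only [hΦ]
      linarith
    have : Tendsto (fun n => Φ n x - (1/2:ℝ)^(n+1)) atTop (𝓝 (ψ x - 0)) :=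
      (hpt x).sub hpow
    rw [sub_zero] at this
    exact le_of_tendsto' this hub

end KT

theorem minorant_set_add
    {X : Type*} [TopologicalSpace X] [T2Space X] [NormalSpace X]
    (f g : X → ℝ) (hf : LowerSemicontinuous f) (hg : LowerSemicontinuous g)
    (hfb : ∃ m : ℝ, ∀ x, m ≤ f x) (hgb : ∃ m : ℝ, ∀ x, m ≤ g x) :
    {φ : X →ᵇ ℝ | ∀ x, φ x ≤ f x + g x} =
      {φ : X →ᵇ ℝ | ∀ x, φ x ≤ f x} + {φ : X →ᵇ ℝ | ∀ x, φ x ≤ g x} := by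
  obtain ⟨mf, hmf⟩ := hfb
  obtain ⟨mg, hmg⟩ := hgb
  ext φ
  simp only [Set.mem_setOf_eq, Set.mem_add]
  constructor
  · intro hφ
    set C : ℝ := max mf (‖φ‖ - mg) with hC
    set u : X → ℝ := fun x => max (φ x - g x) mf with hu
    set v : X → ℝ := fun x => min (f x) C with hv
    have hφle : ∀ x, φ x ≤ ‖φ‖ := fun x =>
      (le_abs_self _).trans ((Real.norm_eq_abs _ ▸ φ.norm_coe_le_norm x))
    have huv : ∀ x, u x ≤ v x := by
      intro x
      apply max_le <;> apply le_min
      · linarith [hφ x]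
      · have := hφle x
        have := hmg x
        have : φ x - g x ≤ ‖φ‖ - mg := by linarith
        exact this.trans (le_max_right _ _)
      · exact hmf x
      · exact le_max_left _ _
    obtain ⟨ψ, hψ1, hψ2⟩ := katetov_tong u v
      (usc_max (usc_sub φ.continuous hg) continuous_const.upperSemicontinuous)
      (lsc_min hf continuous_const.lowerSemicontinuous)
      huv mf C (fun x => le_max_right _ _) (fun x => min_le_right _ _)
    refine ⟨ψ, fun x => (hψ2 x).trans (min_le_left _ _), φ - ψ, fun x => ?_, by abel⟩
    have h1 : φ x - g x ≤ ψ x := (le_max_left _ _).trans (hψ1 x)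
    simp only [BoundedContinuousFunction.coe_sub, Pi.sub_apply]
    linarith
  · rintro ⟨a, ha, b, hb, rfl⟩
    intro x
    simp only [BoundedContinuousFunction.coe_add, Pi.add_apply]
    exact add_le_add (ha x) (hb x)

end KTproof
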